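/- For n ≥ 2, the following recursion holds in B_n(ω) ⊗_F F(u_1,…,u_n): Ψ(u_1,…,u_n) = Ψ(u_1,…,u_{n−1}) · (1 − e_{n−1,n}/(u_{n−1}+u_n))(1 − e_{n−2,n}/(u_{n−2}+u_n))⋯(1 − e_{1,n}/(u_1+u_n)) · (1 − s_{1,n}/(u_1−u_n))(1 − s_{2,n}/(u_2−u_n))⋯(1 − s_{n−1,n}/(u_{n−1}−u_n)), where Ψ(u_1,…,u_{n−1}) = ∏_{1≤i<j≤n−1}(1 − e_{ij}/(u_i+u_j)) · ∏_{1≤i<j≤n−1}(1 − s_{ij}/(u_i−u_j)) with products in lexicographic order on (i,j). -/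

import Mathlib

/-!
Common definitions for the fusion procedure for the Brauer algebra
(Isaev–Molev, "Fusion procedure for the Brauer algebra").
-/

noncomputable section
open scoped BigOperators
open Classical

namespace BrauerFusion

/-- The base field `F = ℂ(ω)`. -/
abbrev F : Type := RatFunc ℂ

/-- The indeterminate `ω ∈ ℂ(ω)`. -/
def ωF : F := RatFunc.X

/-- `s e : ℕ → A` satisfy the defining relations of the Brauer algebra `B_n(ω)`
over the commutative base `R`; here `s i`, `e i` represent the generators
`s_i`, `e_i` for `1 ≤ i ≤ n - 1` (values at other indices are irrelevant). -/
structure IsBrauer {R : Type*} {A : Type*} [CommRing R] [Ring A] [Algebra R A]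
    (n : ℕ) (ω : R) (s e : ℕ → A) : Prop where
  ss : ∀ i, 1 ≤ i → i + 1 ≤ n → s i * s i = 1
  ee : ∀ i, 1 ≤ i → i + 1 ≤ n → e i * e i = ω • e i
  se : ∀ i, 1 ≤ i → i + 1 ≤ n → s i * e i = e i
  es : ∀ i, 1 ≤ i → i + 1 ≤ n → e i * s i = e i
  ss_comm : ∀ i j, 1 ≤ i → j + 1 ≤ n → i + 1 < j → s i * s j = s j * s i
  ee_comm : ∀ i j, 1 ≤ i → j + 1 ≤ n → i + 1 < j → e i * e j = e j * e i
  se_comm : ∀ i j, 1 ≤ i → j + 1 ≤ n → i + 1 < j → s i * e j = e j * s i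
  es_comm : ∀ i j, 1 ≤ i → j + 1 ≤ n → i + 1 < j → s j * e i = e i * s j
  braid : ∀ i, 1 ≤ i → i + 2 ≤ n → s i * s (i+1) * s i = s (i+1) * s i * s (i+1)
  eee₁ : ∀ i, 1 ≤ i → i + 2 ≤ n → e i * e (i+1) * e i = e i
  eee₂ : ∀ i, 1 ≤ i → i + 2 ≤ n → e (i+1) * e i * e (i+1) = e (i+1)
  see : ∀ i, 1 ≤ i → i + 2 ≤ n → s i * e (i+1) * e i = s (i+1) * e i
  ees : ∀ i, 1 ≤ i → i + 2 ≤ n → e (i+1) * e i * s (i+1) = e (i+1) * s i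

variable {A : Type*} [Ring A]

/-- The transposition `s_{ij} = s_i s_{i+1} ⋯ s_{j-2} s_{j-1} s_{j-2} ⋯ s_{i+1} s_i`
(for `i < j`), defined by `s_{i,i+1} = s_i` and `s_{ij} = s_i s_{i+1,j} s_i`. -/
def sij (s : ℕ → A) (i j : ℕ) : A :=
  if h : i + 1 < j then s i * sij s (i+1) j * s i else s i
termination_by j - i
decreasing_by omega

/-- The element `e_{ij} = s_{i,j-1} e_{j-1} s_{i,j-1}` (for `i < j`), with `e_{i,i+1} = e_i`. -/
def eij (s e : ℕ → A) (i j : ℕ) : A :=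
  if i + 1 < j then sij s i (j-1) * e (j-1) * sij s i (j-1) else e i

/-- `x_j^{(m)} = (ω-1)/2 + ∑_{r=1}^{j-1} (s_{rm} - e_{rm})`. -/
def jmM {R : Type*} [Field R] [Algebra R A] (ω : R) (s e : ℕ → A) (j m : ℕ) : A :=
  algebraMap R A ((ω - 1) / 2) + ∑ r ∈ Finset.Icc 1 (j-1), (sij s r m - eij s e r m)

/-- The Jucys–Murphy element `x_r = (ω-1)/2 + ∑_{k=1}^{r-1} (s_{kr} - e_{kr})`. -/
def jm {R : Type*} [Field R] [Algebra R A] (ω : R) (s e : ℕ → A) (r : ℕ) : A :=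
  jmM ω s e r r

/-- The pairs `(i, j)` with `1 ≤ i < j ≤ n` in lexicographic order. -/
def lexPairs (n : ℕ) : List (ℕ × ℕ) :=
  (List.range' 1 n).flatMap fun i =>
    ((List.range' 1 n).filter fun j => decide (i < j)).map fun j => (i, j)

/-- The rational function
`Ψ(u_1,…,u_n) = ∏_{1≤i<j≤n} (1 - e_{ij}/(u_i+u_j)) ∏_{1≤i<j≤n} (1 - s_{ij}/(u_i-u_j))`,
with ordered products over the pairs `(i,j)` in lexicographic order. -/
def Psi {K : Type*} [Field K] [Algebra K A] (s e : ℕ → A) (n : ℕ) (u : ℕ → K) : A :=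
  ((lexPairs n).map fun p => 1 - (u p.1 + u p.2)⁻¹ • eij s e p.1 p.2).prod *
  ((lexPairs n).map fun p => 1 - (u p.1 - u p.2)⁻¹ • sij s p.1 p.2).prod

/-- An updown tableau of length `n`: a sequence of Young diagrams
`Λ_0 = ∅, Λ_1, …, Λ_n` in which `Λ_r` is obtained from `Λ_{r-1}` by adding
(`add r = true`) or removing (`add r = false`) the box `box r`. -/
structure UpDownTableau (n : ℕ) where
  shape : ℕ → YoungDiagram
  box : ℕ → ℕ × ℕ
  add : ℕ → Bool
  shape_zero : shape 0 = ⊥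
  step_add : ∀ r, 1 ≤ r → r ≤ n → add r = true →
    box r ∉ shape (r-1) ∧ (shape r).cells = insert (box r) (shape (r-1)).cells
  step_rem : ∀ r, 1 ≤ r → r ≤ n → add r = false →
    box r ∉ shape r ∧ (shape (r-1)).cells = insert (box r) (shape r).cells

/-- The content `c_r` of an updown tableau: `(ω-1)/2 + j - i` if the box `(i,j)` was
added at step `r`, and `-((ω-1)/2 + j - i)` if it was removed. -/
def content {R : Type*} [Field R] (ω : R) {n : ℕ} (T : UpDownTableau n) (r : ℕ) : R :=
  if T.add r then (ω - 1) / 2 + ((T.box r).2 : R) - ((T.box r).1 : R)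
  else -((ω - 1) / 2 + ((T.box r).2 : R) - ((T.box r).1 : R))

/-- The content attached to a box `b` which can be removed from (`b ∈ μ`) or
added to (`b ∉ μ`) the diagram `μ`. -/
def boxContent {R : Type*} [Field R] (ω : R) (μ : YoungDiagram) (b : ℕ × ℕ) : R :=
  if b ∈ μ then -((ω - 1) / 2 + (b.2 : R) - (b.1 : R))
  else (ω - 1) / 2 + (b.2 : R) - (b.1 : R)

/-- All boxes `(i,j)` with `i, j < N`, listed in lexicographic order. -/
def gridList (N : ℕ) : List (ℕ × ℕ) :=
  (List.range N).flatMap fun i => (List.range N).map fun j => (i, j)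

/-- A box which can be added to, or removed from, the Young diagram `μ`
so that the result is again a Young diagram. -/
def isCandidate (μ : YoungDiagram) (b : ℕ × ℕ) : Prop :=
  (b ∉ μ ∧ ∃ ν : YoungDiagram, ν.cells = insert b μ.cells) ∨
  (b ∈ μ ∧ ∃ ν : YoungDiagram, μ.cells = insert b ν.cells)

/-- The list of all boxes which can be added to or removed from `μ`. -/
def candList (μ : YoungDiagram) : List (ℕ × ℕ) :=
  (gridList (μ.card + 2)).filter fun b => decide (isCandidate μ b)

/-- The primitive idempotent `E_{(Λ_1,…,Λ_r)}`, defined recursively by `E = 1` for `r = 0`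
and `E_T = E_U ∏_a (x_r - a)/(c_r - a)`, the product over the contents `a` of all boxes
(other than the box of step `r`) which can be added to or removed from `Λ_{r-1}`. -/
def idem {R : Type*} [Field R] [Algebra R A] (ω : R) (s e : ℕ → A) {n : ℕ}
    (T : UpDownTableau n) : ℕ → A
  | 0 => 1
  | r + 1 =>
    idem ω s e T r *
      (((candList (T.shape r)).filter (fun b => decide (b ≠ T.box (r+1)))).map fun b =>
        (content ω T (r+1) - boxContent ω (T.shape r) b)⁻¹ •
          (jm ω s e (r+1) - algebraMap R A (boxContent ω (T.shape r) b))).prod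

/-- `d_k` : the number of steps among the first `len` steps of `T` adding a box
on the diagonal `k`. -/
def dAdd {n : ℕ} (T : UpDownTableau n) (len : ℕ) (k : ℤ) : ℤ :=
  (((Finset.Icc 1 len).filter fun t =>
    T.add t = true ∧ ((T.box t).2 : ℤ) - ((T.box t).1 : ℤ) = k).card : ℤ)

/-- `d'_k` : the number of steps among the first `len` steps of `T` removing a box
on the diagonal `k`. -/
def dRem {n : ℕ} (T : UpDownTableau n) (len : ℕ) (k : ℤ) : ℤ :=
  (((Finset.Icc 1 len).filter fun t =>
    T.add t = false ∧ ((T.box t).2 : ℤ) - ((T.box t).1 : ℤ) = k).card : ℤ)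

/-- `g_k = δ_{k0} + d_{k-1} + d_{k+1} - 2 d_k`. -/
def gAdd {n : ℕ} (T : UpDownTableau n) (len : ℕ) (k : ℤ) : ℤ :=
  (if k = 0 then 1 else 0) + dAdd T len (k-1) + dAdd T len (k+1) - 2 * dAdd T len k

/-- `g'_k = d'_{k-1} + d'_{k+1} - 2 d'_k`. -/
def gRem {n : ℕ} (T : UpDownTableau n) (len : ℕ) (k : ℤ) : ℤ :=
  dRem T len (k-1) + dRem T len (k+1) - 2 * dRem T len k

/-- The diagonal `j - i` of the box of step `r`. -/
def diagOf {n : ℕ} (T : UpDownTableau n) (r : ℕ) : ℤ :=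
  ((T.box r).2 : ℤ) - ((T.box r).1 : ℤ)

/-- The exponent `p_r` of an updown tableau: `p_r = 1 - g_{k_r}` if a box is added on the
diagonal `k_r` at step `r`, and `p_r = 1 - g'_{k_r}` if a box is removed, where `g, g'`
are computed from the first `r - 1` steps. -/
def pExp {n : ℕ} (T : UpDownTableau n) (r : ℕ) : ℤ :=
  1 - (if T.add r then gAdd T (r-1) (diagOf T r) else gRem T (r-1) (diagOf T r))

/-- The factor `φ(U, T)` in the recursive definition of `f(T)`; the products over all
integers `k` are realized as products over `-r-1 ≤ k ≤ r+1`, which contains the support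
of `g` and `g'` (all other factors are equal to 1). -/
def phiStep {n : ℕ} (T : UpDownTableau n) (r : ℕ) : F :=
  if T.add r then
    (∏ k ∈ (Finset.Icc (-(r:ℤ)-1) ((r:ℤ)+1)).erase (diagOf T r),
      ((diagOf T r - k : ℤ) : F) ^ gAdd T (r-1) k) *
    ∏ k ∈ Finset.Icc (-(r:ℤ)-1) ((r:ℤ)+1),
      (((diagOf T r + k : ℤ) : F) + ωF - 1) ^ gRem T (r-1) k
  else
    (∏ k ∈ (Finset.Icc (-(r:ℤ)-1) ((r:ℤ)+1)).erase (diagOf T r),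
      ((k - diagOf T r : ℤ) : F) ^ gRem T (r-1) k) *
    ∏ k ∈ Finset.Icc (-(r:ℤ)-1) ((r:ℤ)+1),
      ((1 : F) - ωF - ((diagOf T r + k : ℤ) : F)) ^ gAdd T (r-1) k

/-- The scalar `f(T) ∈ ℂ(ω)`, defined recursively by `f(∅) = 1`, `f(T) = f(U) φ(U,T)`. -/
def fT {n : ℕ} (T : UpDownTableau n) : ℕ → F
  | 0 => 1
  | r + 1 => fT T r * phiStep T (r+1)

/-- The hook length of the box `b` in the Young diagram `μ`. -/
def hookLength (μ : YoungDiagram) (b : ℕ × ℕ) : ℕ :=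
  (μ.cells.filter fun c => c.1 = b.1 ∧ b.2 < c.2).card +
  (μ.cells.filter fun c => c.2 = b.2 ∧ b.1 < c.1).card + 1

/-- The product of the hook lengths of all boxes of `μ`. -/
def hookProd (μ : YoungDiagram) : ℕ :=
  ∏ b ∈ μ.cells, hookLength μ b

/-- Polynomials in the variables `u_1, u_2, …` over `F = ℂ(ω)`. -/
abbrev MvP : Type := MvPolynomial ℕ F

/-- The field `F(u_1, u_2, …)` of rational functions in the variables `u_r` over `ℂ(ω)`. -/
abbrev KK : Type := FractionRing MvP

/-- Substituting `u_r = c` into a polynomial in the `u`'s. -/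
def substOne (r : ℕ) (c : F) : MvP →ₐ[F] MvP :=
  MvPolynomial.aeval fun t => if t = r then MvPolynomial.C c else MvPolynomial.X t

/-- The variable `u_r` as an element of `KK`. -/
def uVar (r : ℕ) : KK := algebraMap MvP KK (MvPolynomial.X r)

/-- A constant (an element of `ℂ(ω)`) as an element of `KK`. -/
def cK (x : F) : KK := algebraMap MvP KK (MvPolynomial.C x)

/-- The element `ω` of `KK`. -/
def ωK : KK := cK ωF

/-- `RegK r c f v` : the rational function `f ∈ F(u_1, u_2, …)`, viewed as a rational
function of the variable `u_r`, is regular at `u_r = c`, with value `v` there. -/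
def RegK (r : ℕ) (c : F) (f v : KK) : Prop :=
  ∃ p q : MvP, substOne r c q ≠ 0 ∧
    f = algebraMap MvP KK p / algebraMap MvP KK q ∧
    v = algebraMap MvP KK (substOne r c p) / algebraMap MvP KK (substOne r c q)

/-- The subring of "constants": the subring generated by the `s_i`, `e_i` and the
scalars from `ℂ(ω)` (i.e. the copy of the Brauer algebra `B_n(ω)` inside `B_n(ω) ⊗ KK`). -/
def constSubK [Algebra KK A] (s e : ℕ → A) : Subring A :=
  Subring.closure (Set.range s ∪ Set.range e ∪ Set.range fun x : F => algebraMap KK A (cK x))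

/-- `RegStep s e r c a v` : the element `a` of `B ⊗ F(u_1,…,u_n)`, viewed as a rational
function of `u_r`, is regular at `u_r = c` with value `v`: it can be written as a finite sum
`a = ∑ f_i • b_i` with constant `b_i` and coordinates `f_i` regular at `u_r = c` (denominators
not vanishing at `u_r = c`), whose values at `u_r = c` give `v = ∑ f_i(c) • b_i`. -/
def RegStep [Algebra KK A] (s e : ℕ → A) (r : ℕ) (c : F) (a v : A) : Prop :=
  ∃ (m : ℕ) (f g : Fin m → KK) (b : Fin m → A),
    (∀ i, RegK r c (f i) (g i)) ∧ (∀ i, b i ∈ constSubK s e) ∧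
    a = ∑ i, f i • b i ∧ v = ∑ i, g i • b i

end BrauerFusion

namespace BrauerFusion

section AuxProofs
variable {A : Type*} [Ring A]

section Rels

variable {R : Type*} [CommRing R] [Algebra R A]
variable {n : ℕ} {ω : R} {s e : ℕ → A}

theorem rearr {a b c x : A} (h : a * b = c) : a * (b * x) = c * x := by
  rw [← mul_assoc, h]

theorem rearr3 {a b c d x : A} (h : a * b * c = d) : a * (b * (c * x)) = d * x := by
  rw [← mul_assoc, ← mul_assoc, h]

theorem comm_of_conj {x a : A} (hx : x * x = 1) (h : x * a * x = a) : Commute x a := by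
  have : x * a * (x * x) = a * x := by rw [← mul_assoc, h]
  rw [hx, mul_one] at this
  exact this

theorem conj_of_comm {x a : A} (hx : x * x = 1) (h : Commute x a) : x * a * x = a := by
  rw [h.eq, mul_assoc, hx, mul_one]

theorem sij_base (s : ℕ → A) (i : ℕ) : sij s i (i+1) = s i := by
  rw [sij]; simp

theorem sij_step (s : ℕ → A) {i j : ℕ} (h : i + 1 < j) :
    sij s i j = s i * sij s (i+1) j * s i := by rw [sij]; rw [dif_pos h]

theorem eij_base (s e : ℕ → A) (i : ℕ) : eij s e i (i+1) = e i := by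
  rw [eij]; simp

theorem eij_step (s e : ℕ → A) {i j : ℕ} (h : i + 1 < j) :
    eij s e i j = sij s i (j-1) * e (j-1) * sij s i (j-1) := by
  rw [eij, if_pos h]

-- derived generator relations
theorem Dees (hB : IsBrauer n ω s e) {i : ℕ} (h1 : 1 ≤ i) (h2 : i + 2 ≤ n) :
    e (i+1) * s i * s (i+1) = e (i+1) * e i := by
  have h := hB.ees i h1 h2
  have hss := hB.ss (i+1) (by omega) h2
  calc e (i+1) * s i * s (i+1)
      = e (i+1) * e i * s (i+1) * s (i+1) := by rw [h]
    _ = e (i+1) * e i * (s (i+1) * s (i+1)) := by rw [mul_assoc]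
    _ = e (i+1) * e i := by rw [hss, mul_one]

theorem Dsee (hB : IsBrauer n ω s e) {i : ℕ} (h1 : 1 ≤ i) (h2 : i + 2 ≤ n) :
    s i * s (i+1) * e i = e (i+1) * e i := by
  have h := hB.see i h1 h2
  have hss := hB.ss i h1 (by omega)
  calc s i * s (i+1) * e i
      = s i * (s (i+1) * e i) := by rw [mul_assoc]
    _ = s i * (s i * e (i+1) * e i) := by rw [← h]
    _ = s i * s i * e (i+1) * e i := by simp only [← mul_assoc]
    _ = e (i+1) * e i := by rw [hss, one_mul]

theorem Dese (hB : IsBrauer n ω s e) {i : ℕ} (h1 : 1 ≤ i) (h2 : i + 2 ≤ n) :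
    e (i+1) * s i * e (i+1) = e (i+1) := by
  have h := hB.ees i h1 h2
  calc e (i+1) * s i * e (i+1)
      = e (i+1) * e i * s (i+1) * e (i+1) := by rw [h]
    _ = e (i+1) * e i * (s (i+1) * e (i+1)) := by rw [mul_assoc]
    _ = e (i+1) * e i * e (i+1) := by rw [hB.se (i+1) (by omega) h2]
    _ = e (i+1) := hB.eee₂ i h1 h2

theorem Dconj (hB : IsBrauer n ω s e) {i : ℕ} (h1 : 1 ≤ i) (h2 : i + 2 ≤ n) :
    s i * s (i+1) * e i * s (i+1) * s i = e (i+1) := by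
  rw [Dsee hB h1 h2]
  calc e (i+1) * e i * s (i+1) * s i
      = e (i+1) * s i * s i := by rw [hB.ees i h1 h2]
    _ = e (i+1) * (s i * s i) := by rw [mul_assoc]
    _ = e (i+1) := by rw [hB.ss i h1 (by omega), mul_one]

theorem Dd5 (hB : IsBrauer n ω s e) {i : ℕ} (h1 : 1 ≤ i) (h2 : i + 2 ≤ n) :
    e i * s (i+1) * s i = s (i+1) * s i * e (i+1) := by
  have h := Dconj hB h1 h2
  have hs1 := hB.ss i h1 (by omega)
  have hs2 := hB.ss (i+1) (by omega) h2
  calc e i * s (i+1) * s i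
      = 1 * e i * s (i+1) * s i := by rw [one_mul]
    _ = s (i+1) * s (i+1) * e i * s (i+1) * s i := by rw [hs2]
    _ = s (i+1) * (s (i+1) * e i * s (i+1) * s i) := by simp only [mul_assoc]
    _ = s (i+1) * (1 * (s (i+1) * e i * s (i+1) * s i)) := by rw [one_mul]
    _ = s (i+1) * (s i * s i * (s (i+1) * e i * s (i+1) * s i)) := by rw [hs1]
    _ = s (i+1) * s i * (s i * s (i+1) * e i * s (i+1) * s i) := by simp only [mul_assoc]
    _ = s (i+1) * s i * e (i+1) := by rw [h]

theorem Dd6 (hB : IsBrauer n ω s e) {i : ℕ} (h1 : 1 ≤ i) (h2 : i + 2 ≤ n) :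
    s i * e (i+1) * s i = s (i+1) * e i * s (i+1) := by
  have h := Dconj hB h1 h2
  have hs1 := hB.ss i h1 (by omega)
  calc s i * e (i+1) * s i
      = s i * (s i * s (i+1) * e i * s (i+1) * s i) * s i := by rw [h]
    _ = s i * s i * (s (i+1) * e i * s (i+1)) * (s i * s i) := by simp only [mul_assoc]
    _ = s (i+1) * e i * s (i+1) := by rw [hs1, one_mul, mul_one]

-- squares
theorem S_sq_aux (hB : IsBrauer n ω s e) :
    ∀ d i j, j - i ≤ d → 1 ≤ i → i < j → j ≤ n → sij s i j * sij s i j = 1 := by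
  intro d
  induction d with
  | zero => intro i j h1 _ h3 _; omega
  | succ d ih =>
    intro i j hd h1 hij hj
    by_cases h : i + 1 < j
    · rw [sij_step s h]
      have hs := hB.ss i h1 (by omega)
      have hIH := ih (i+1) j (by omega) (by omega) h hj
      simp only [mul_assoc]
      rw [rearr hs, one_mul, rearr hIH, one_mul, hs]
    · have hji : j = i + 1 := by omega
      subst hji
      rw [sij_base]
      exact hB.ss i h1 (by omega)

theorem S_sq (hB : IsBrauer n ω s e) {i j : ℕ} (h1 : 1 ≤ i) (hij : i < j) (hj : j ≤ n) :
    sij s i j * sij s i j = 1 :=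
  S_sq_aux hB (j - i) i j le_rfl h1 hij hj

end Rels
section Rels2
variable {R : Type*} [CommRing R] [Algebra R A]
variable {n : ℕ} {ω : R} {s e : ℕ → A}

-- distant commutation: generator t with the word sij s i j (letters s_i .. s_{j-1})
theorem dist_s_S (hB : IsBrauer n ω s e) :
    ∀ d i j t, j - i ≤ d → 1 ≤ i → i < j → j ≤ n → 1 ≤ t → t + 1 ≤ n →
      (t + 2 ≤ i ∨ j + 1 ≤ t) → Commute (s t) (sij s i j) := by
  intro d
  induction d with
  | zero => intro i j t h1 _ h3 _ _ _ _; omega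
  | succ d ih =>
    intro i j t hd h1 hij hj ht1 ht2 hdist
    have hc : Commute (s t) (s i) := by
      rcases hdist with h | h
      · exact hB.ss_comm t i ht1 (by omega) (by omega)
      · exact (hB.ss_comm i t h1 (by omega) (by omega)).symm
    by_cases h : i + 1 < j
    · rw [sij_step s h]
      exact (hc.mul_right (ih (i+1) j t (by omega) (by omega) h hj ht1 ht2 (by omega))).mul_right hc
    · have hji : j = i + 1 := by omega
      subst hji; rw [sij_base]; exact hc

theorem dist_e_S (hB : IsBrauer n ω s e) :
    ∀ d i j t, j - i ≤ d → 1 ≤ i → i < j → j ≤ n → 1 ≤ t → t + 1 ≤ n →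
      (t + 2 ≤ i ∨ j + 1 ≤ t) → Commute (e t) (sij s i j) := by
  intro d
  induction d with
  | zero => intro i j t h1 _ h3 _ _ _ _; omega
  | succ d ih =>
    intro i j t hd h1 hij hj ht1 ht2 hdist
    have hc : Commute (e t) (s i) := by
      rcases hdist with h | h
      · exact (hB.es_comm t i ht1 (by omega) (by omega)).symm
      · exact (hB.se_comm i t h1 (by omega) (by omega)).symm
    by_cases h : i + 1 < j
    · rw [sij_step s h]
      exact (hc.mul_right (ih (i+1) j t (by omega) (by omega) h hj ht1 ht2 (by omega))).mul_right hc
    · have hji : j = i + 1 := by omega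
      subst hji; rw [sij_base]; exact hc

theorem dist_s_E (hB : IsBrauer n ω s e) {i j t : ℕ}
    (h1 : 1 ≤ i) (hij : i < j) (hj : j ≤ n) (ht1 : 1 ≤ t) (ht2 : t + 1 ≤ n)
    (hdist : t + 2 ≤ i ∨ j + 1 ≤ t) : Commute (s t) (eij s e i j) := by
  have hce : Commute (s t) (e (j-1)) := by
    rcases hdist with h | h
    · exact hB.se_comm t (j-1) ht1 (by omega) (by omega)
    · exact hB.es_comm (j-1) t (by omega) ht2 (by omega)
  by_cases h : i + 1 < j
  · rw [eij_step s e h]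
    have hcs := dist_s_S hB (j-1-i) i (j-1) t le_rfl h1 (by omega) (by omega) ht1 ht2 (by omega)
    exact (hcs.mul_right hce).mul_right hcs
  · have hji : j = i + 1 := by omega
    subst hji; rw [eij_base]; simpa using hce

theorem dist_e_E (hB : IsBrauer n ω s e) {i j t : ℕ}
    (h1 : 1 ≤ i) (hij : i < j) (hj : j ≤ n) (ht1 : 1 ≤ t) (ht2 : t + 1 ≤ n)
    (hdist : t + 2 ≤ i ∨ j + 1 ≤ t) : Commute (e t) (eij s e i j) := by
  have hce : Commute (e t) (e (j-1)) := by
    rcases hdist with h | h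
    · exact hB.ee_comm t (j-1) ht1 (by omega) (by omega)
    · exact (hB.ee_comm (j-1) t (by omega) ht2 (by omega)).symm
  by_cases h : i + 1 < j
  · rw [eij_step s e h]
    have hcs := dist_e_S hB (j-1-i) i (j-1) t le_rfl h1 (by omega) (by omega) ht1 ht2 (by omega)
    exact (hcs.mul_right hce).mul_right hcs
  · have hji : j = i + 1 := by omega
    subst hji; rw [eij_base]; simpa using hce

-- s j * S i j * s j = S i (j+1)
theorem S_top (hB : IsBrauer n ω s e) :
    ∀ d i j, j - i ≤ d → 1 ≤ i → i < j → j + 1 ≤ n →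
      s j * sij s i j * s j = sij s i (j+1) := by
  intro d
  induction d with
  | zero => intro i j h1 _ h3 _; omega
  | succ d ih =>
    intro i j hd h1 hij hj
    by_cases h : i + 1 < j
    · rw [sij_step s h, sij_step s (show i + 1 < j + 1 by omega)]
      have hcomm := hB.ss_comm i j h1 hj (by omega)
      have hIH := ih (i+1) j (by omega) (by omega) h hj
      simp only [mul_assoc]
      rw [rearr hcomm.symm]
      simp only [mul_assoc]
      rw [hcomm, rearr3 hIH]
    · have hji : j = i + 1 := by omega
      subst hji
      rw [sij_base, sij_step s (show i + 1 < i + 2 by omega), sij_base]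
      exact (hB.braid i h1 hj).symm

theorem S_pop (hB : IsBrauer n ω s e) {i j : ℕ} (h1 : 1 ≤ i) (hij : i + 1 < j) (hj : j ≤ n) :
    sij s i j = s (j-1) * sij s i (j-1) * s (j-1) := by
  have := S_top hB (j-1-i) i (j-1) le_rfl h1 (by omega) (by omega)
  rw [show j - 1 + 1 = j by omega] at this
  exact this.symm

-- E i j = s i * E (i+1) j * s i
theorem E_drop (hB : IsBrauer n ω s e) {i j : ℕ} (h1 : 1 ≤ i) (hij : i + 1 < j) (hj : j ≤ n) :
    eij s e i j = s i * eij s e (i+1) j * s i := by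
  by_cases h : i + 2 < j
  · rw [eij_step s e hij, eij_step s e (show i + 1 + 1 < j by omega),
        sij_step s (show i + 1 < j - 1 by omega)]
    have hcomm : s i * e (j-1) = e (j-1) * s i := hB.se_comm i (j-1) h1 (by omega) (by omega)
    simp only [mul_assoc]
    rw [rearr hcomm]
    simp only [mul_assoc]
    rw [rearr (hB.ss i h1 (by omega)), one_mul]
  · have hji : j = i + 2 := by omega
    subst hji
    rw [eij_step s e hij, eij_base]
    simp only [show i + 2 - 1 = i + 1 from rfl, sij_base]

-- s j * E i j * s j = E i (j+1)
theorem E_top (hB : IsBrauer n ω s e) :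
    ∀ d i j, j - i ≤ d → 1 ≤ i → i < j → j + 1 ≤ n →
      s j * eij s e i j * s j = eij s e i (j+1) := by
  intro d
  induction d with
  | zero => intro i j h1 _ h3 _; omega
  | succ d ih =>
    intro i j hd h1 hij hj
    by_cases h : i + 1 < j
    · have hjn : j ≤ n := by omega
      have hIH := ih i (j-1) (by omega) h1 (by omega) (by omega)
      rw [show j - 1 + 1 = j by omega] at hIH
      have hd6 : s (j-1) * e j * s (j-1) = s j * e (j-1) * s j := by
        have := Dd6 hB (i := j-1) (by omega) (by omega)
        rw [show j - 1 + 1 = j by omega] at this; exact this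
      have hbr : s (j-1) * s j * s (j-1) = s j * s (j-1) * s j := by
        have := hB.braid (j-1) (by omega) (by omega)
        rw [show j - 1 + 1 = j by omega] at this; exact this
      have hbr' : s (j-1) * (s j * s (j-1)) = s j * (s (j-1) * s j) := by
        rw [← mul_assoc, hbr, mul_assoc]
      have hcsj : Commute (s j) (sij s i (j-1)) :=
        dist_s_S hB (j-1-i) i (j-1) j le_rfl h1 (by omega) (by omega) (by omega) hj (by omega)
      have hcsE : Commute (s j) (eij s e i (j-1)) :=
        dist_s_E hB h1 (by omega) (by omega) (by omega) hj (by omega)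
      have hM : sij s i (j-1) * e (j-1) * sij s i (j-1) = eij s e i j :=
        (eij_step s e h).symm
      rw [eij_step s e (show i + 1 < j + 1 by omega), show j + 1 - 1 = j by omega,
          S_pop hB h1 h hjn]
      simp only [mul_assoc]
      rw [rearr3 hd6]
      simp only [mul_assoc]
      rw [rearr hcsj.eq]
      simp only [mul_assoc]
      rw [rearr hcsj.symm.eq]
      simp only [mul_assoc]
      rw [rearr3 hM, ← hIH]
      simp only [mul_assoc]
      rw [rearr3 hbr]
      simp only [mul_assoc]
      rw [hbr']
      rw [rearr hcsE.eq]
      simp only [mul_assoc]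
      rw [rearr (hB.ss j (by omega) hj), one_mul]
    · have hji : j = i + 1 := by omega
      subst hji
      rw [eij_base, eij_step s e (show i + 1 < i + 2 by omega),
          show i + 2 - 1 = i + 1 by omega, sij_base]
      exact (Dd6 hB h1 hj).symm

theorem E_pop (hB : IsBrauer n ω s e) {i j : ℕ} (h1 : 1 ≤ i) (hij : i + 1 < j) (hj : j ≤ n) :
    eij s e i j = s (j-1) * eij s e i (j-1) * s (j-1) := by
  have := E_top hB (j-1-i) i (j-1) le_rfl h1 (by omega) (by omega)
  rw [show j - 1 + 1 = j by omega] at this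
  exact this.symm

end Rels2
section Rels3
variable {R : Type*} [CommRing R] [Algebra R A]
variable {n : ℕ} {ω : R} {s e : ℕ → A}

theorem S_interior (hB : IsBrauer n ω s e) :
    ∀ d i t j, t - i ≤ d → 1 ≤ i → i < t → t + 1 < j → j ≤ n →
      Commute (s t) (sij s i j) := by
  intro d
  induction d with
  | zero => intro i t j h1 _ h3 _ _; omega
  | succ d ih =>
    intro i t j hd h1 hit htj hj
    by_cases h : i + 1 < t
    · rw [sij_step s (show i + 1 < j by omega)]
      have hc : Commute (s t) (s i) := (hB.ss_comm i t h1 (by omega) h).symm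
      exact (hc.mul_right (ih (i+1) t j (by omega) (by omega) h htj hj)).mul_right hc
    · have hti : t = i + 1 := by omega
      subst hti
      rw [sij_step s (show i + 1 < j by omega), sij_step s (show i + 1 + 1 < j by omega)]
      have hX : Commute (s i) (sij s (i+2) j) :=
        dist_s_S hB (j-(i+2)) (i+2) j i le_rfl (by omega) (by omega) hj h1 (by omega) (by omega)
      have hbr := hB.braid i h1 (by omega)
      show s (i+1) * (s i * (s (i+1) * sij s (i+2) j * s (i+1)) * s i) = _
      simp only [mul_assoc]
      rw [rearr3 hbr.symm]
      simp only [mul_assoc]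
      rw [rearr hX.eq]
      simp only [mul_assoc]
      rw [show s i * (s (i+1) * s i) = s (i+1) * (s i * s (i+1)) from by
        rw [← mul_assoc, hbr, mul_assoc]]

theorem eS_interior (hB : IsBrauer n ω s e) :
    ∀ d i t j, t - i ≤ d → 1 ≤ i → i < t → t + 1 < j → j ≤ n →
      Commute (e t) (sij s i j) := by
  intro d
  induction d with
  | zero => intro i t j h1 _ h3 _ _; omega
  | succ d ih =>
    intro i t j hd h1 hit htj hj
    by_cases h : i + 1 < t
    · rw [sij_step s (show i + 1 < j by omega)]
      have hc : Commute (e t) (s i) := (hB.se_comm i t h1 (by omega) h).symm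
      exact (hc.mul_right (ih (i+1) t j (by omega) (by omega) h htj hj)).mul_right hc
    · have hti : t = i + 1 := by omega
      subst hti
      rw [sij_step s (show i + 1 < j by omega), sij_step s (show i + 1 + 1 < j by omega)]
      have hX : Commute (e i) (sij s (i+2) j) :=
        dist_e_S hB (j-(i+2)) (i+2) j i le_rfl (by omega) (by omega) hj h1 (by omega) (by omega)
      have h2n : i + 2 ≤ n := by omega
      show e (i+1) * (s i * (s (i+1) * sij s (i+2) j * s (i+1)) * s i) =
        s i * (s (i+1) * sij s (i+2) j * s (i+1)) * s i * e (i+1)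
      simp only [mul_assoc]
      rw [rearr3 (Dees hB h1 h2n)]
      simp only [mul_assoc]
      rw [show s (i+1) * (s i * e (i+1)) = e i * (s (i+1) * s i) from by
        rw [← mul_assoc, ← Dd5 hB h1 h2n, mul_assoc]]
      rw [rearr hX.symm.eq]
      simp only [mul_assoc]
      rw [rearr3 (Dsee hB h1 h2n)]
      simp only [mul_assoc]

theorem sE_interior (hB : IsBrauer n ω s e) {i t j : ℕ}
    (h1 : 1 ≤ i) (hit : i < t) (htj : t + 1 < j) (hj : j ≤ n) :
    Commute (s t) (eij s e i j) := by
  by_cases h : t + 2 < j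
  · rw [eij_step s e (show i + 1 < j by omega)]
    have hcs : Commute (s t) (sij s i (j-1)) :=
      S_interior hB (t-i) i t (j-1) le_rfl h1 hit (by omega) (by omega)
    have hce : Commute (s t) (e (j-1)) := hB.se_comm t (j-1) (by omega) (by omega) (by omega)
    exact (hcs.mul_right hce).mul_right hcs
  · have htj2 : j = t + 2 := by omega
    subst htj2
    apply comm_of_conj (hB.ss t (by omega) (by omega))
    conv_lhs => rw [eij_step s e (show i + 1 < t + 2 by omega), show t + 2 - 1 = t + 1 from rfl,
      S_pop hB h1 (show i + 1 < t + 1 by omega) (show t + 1 ≤ n by omega),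
      show t + 1 - 1 = t from rfl]
    have hd6 := Dd6 hB (i := t) (by omega) (by omega)
    have hc : Commute (s (t+1)) (sij s i t) :=
      dist_s_S hB (t-i) i t (t+1) le_rfl h1 hit (by omega) (by omega) (by omega) (by omega)
    have hE : sij s i t * e t * sij s i t = eij s e i (t+1) := by
      have := eij_step s e (show i + 1 < t + 1 by omega)
      rw [show t + 1 - 1 = t from rfl] at this
      exact this.symm
    simp only [mul_assoc]
    rw [rearr (hB.ss t (by omega) (by omega)), one_mul]
    rw [hB.ss t (by omega) (by omega), mul_one]
    rw [rearr3 hd6]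
    simp only [mul_assoc]
    rw [rearr hc.symm.eq]
    simp only [mul_assoc]
    rw [hc.eq]
    rw [rearr3 hE]
    rw [← mul_assoc]
    have hpop := E_pop hB (i := i) (j := t+2) h1 (by omega) (by omega)
    rw [show t + 2 - 1 = t + 1 from rfl] at hpop
    exact hpop.symm

theorem eE_interior (hB : IsBrauer n ω s e) :
    ∀ d i t j, t - i ≤ d → 1 ≤ i → i < t → t + 1 < j → j ≤ n →
      Commute (e t) (eij s e i j) := by
  intro d
  induction d with
  | zero => intro i t j h1 _ h3 _ _; omega
  | succ d ih =>
    intro i t j hd h1 hit htj hj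
    by_cases h : t + 2 < j
    · rw [eij_step s e (show i + 1 < j by omega)]
      have hcs : Commute (e t) (sij s i (j-1)) :=
        eS_interior hB (t-i) i t (j-1) le_rfl h1 hit (by omega) (by omega)
      have hce : Commute (e t) (e (j-1)) := hB.ee_comm t (j-1) (by omega) (by omega) (by omega)
      exact (hcs.mul_right hce).mul_right hcs
    · have htj2 : j = t + 2 := by omega
      subst htj2
      by_cases h2 : i + 1 < t
      · rw [E_drop hB h1 (show i + 1 < t + 2 by omega) hj]
        have hc : Commute (e t) (s i) := (hB.se_comm i t h1 (by omega) h2).symm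
        exact (hc.mul_right (ih (i+1) t (t+2) (by omega) (by omega) h2 (by omega) hj)).mul_right hc
      · have hti : t = i + 1 := by omega
        subst hti
        have h3n : i + 3 ≤ n := by omega
        have hexp : eij s e i (i+3) = s (i+2) * (s (i+1) * e i * s (i+1)) * s (i+2) := by
          have h1p := E_pop hB (i := i) (j := i+3) h1 (by omega) (by omega)
          rw [show i + 3 - 1 = i + 2 from rfl] at h1p
          have h2p := E_pop hB (i := i) (j := i+2) h1 (by omega) (by omega)
          rw [show i + 2 - 1 = i + 1 from rfl] at h2p
          rw [h1p, h2p, eij_base]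
        have key : e (i+1) * (s (i+2) * (s (i+1) * e i * s (i+1)) * s (i+2)) =
            (s (i+2) * (s (i+1) * e i * s (i+1)) * s (i+2)) * e (i+1) := by
          have hDd5 : e (i+1) * s (i+2) * s (i+1) = s (i+2) * s (i+1) * e (i+2) :=
            Dd5 hB (i := i+1) (by omega) h3n
          simp only [mul_assoc]
          rw [rearr3 hDd5]
          simp only [mul_assoc]
          rw [rearr (show e (i+2) * e i = e i * e (i+2) from
            (hB.ee_comm i (i+2) h1 (by omega) (by omega)).symm)]
          simp only [mul_assoc]
          rw [show e (i+2) * (s (i+1) * s (i+2)) = e (i+2) * e (i+1) from by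
            rw [← mul_assoc]; exact Dees hB (by omega) h3n]
          rw [show s (i+1) * (s (i+2) * e (i+1)) = e (i+2) * e (i+1) from by
            rw [← mul_assoc]; exact Dsee hB (by omega) h3n]
        rw [hexp]
        exact key

end Rels3
section Rels4
variable {R : Type*} [CommRing R] [Algebra R A]
variable {n : ℕ} {ω : R} {s e : ℕ → A}

theorem conj_flip {x a b : A} (hx : x * x = 1) (h : a = x * b * x) : x * a * x = b := by
  rw [h]
  calc x * (x * b * x) * x = x * x * b * (x * x) := by simp only [mul_assoc]
    _ = b := by rw [hx, mul_one, one_mul]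

/-- `E i N` commutes with `S k l` for `i < k < l < N` (nested pattern). -/
theorem comm_E_S_nested (hB : IsBrauer n ω s e) :
    ∀ d i k l N, l - k ≤ d → 1 ≤ i → i < k → k < l → l < N → N ≤ n →
      Commute (eij s e i N) (sij s k l) := by
  intro d
  induction d with
  | zero => intro i k l N h1 _ _ h4 _ _; omega
  | succ d ih =>
    intro i k l N hd h1 hik hkl hlN hN
    have hck : Commute (s k) (eij s e i N) :=
      sE_interior hB h1 hik (by omega) hN
    by_cases h : k + 1 < l
    · rw [sij_step s h]
      exact (hck.symm.mul_right (ih i (k+1) l N (by omega) h1 (by omega) h hlN hN)).mul_right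
        hck.symm
    · have : l = k + 1 := by omega
      subst this; rw [sij_base]; exact hck.symm

/-- `S i N` commutes with `S k l` for `i < k < l < N`. -/
theorem comm_S_S_nested (hB : IsBrauer n ω s e) :
    ∀ d i k l N, l - k ≤ d → 1 ≤ i → i < k → k < l → l < N → N ≤ n →
      Commute (sij s i N) (sij s k l) := by
  intro d
  induction d with
  | zero => intro i k l N h1 _ _ h4 _ _; omega
  | succ d ih =>
    intro i k l N hd h1 hik hkl hlN hN
    have hck : Commute (s k) (sij s i N) :=
      S_interior hB (k-i) i k N le_rfl h1 hik (by omega) hN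
    by_cases h : k + 1 < l
    · rw [sij_step s h]
      exact (hck.symm.mul_right (ih i (k+1) l N (by omega) h1 (by omega) h hlN hN)).mul_right
        hck.symm
    · have : l = k + 1 := by omega
      subst this; rw [sij_base]; exact hck.symm

/-- `E m N` commutes with `S k l` for `k < l < m < N` (separated pattern). -/
theorem comm_E_S_sep (hB : IsBrauer n ω s e) :
    ∀ d k l m N, l - k ≤ d → 1 ≤ k → k < l → l < m → m < N → N ≤ n →
      Commute (eij s e m N) (sij s k l) := by
  intro d
  induction d with
  | zero => intro k l m N h1 _ h3 _ _ _; omega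
  | succ d ih =>
    intro k l m N hd h1 hkl hlm hmN hN
    have hck : Commute (s k) (eij s e m N) :=
      dist_s_E hB (by omega) (by omega) hN h1 (by omega) (by omega)
    by_cases h : k + 1 < l
    · rw [sij_step s h]
      exact (hck.symm.mul_right (ih (k+1) l m N (by omega) (by omega) h hlm hmN hN)).mul_right
        hck.symm
    · have : l = k + 1 := by omega
      subst this; rw [sij_base]; exact hck.symm

/-- `E i N` commutes with `E k j` for `i < k < j < N`. -/
theorem comm_E_E_nested (hB : IsBrauer n ω s e) {i k j N : ℕ}
    (h1 : 1 ≤ i) (hik : i < k) (hkj : k < j) (hjN : j < N) (hN : N ≤ n) :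
    Commute (eij s e i N) (eij s e k j) := by
  by_cases h : k + 1 < j
  · rw [eij_step s e h]
    have hcs : Commute (eij s e i N) (sij s k (j-1)) :=
      comm_E_S_nested hB (j-1-k) i k (j-1) N le_rfl h1 hik (by omega) (by omega) hN
    have hce : Commute (eij s e i N) (e (j-1)) :=
      (eE_interior hB ((j-1)-i) i (j-1) N le_rfl h1 (by omega) (by omega) hN).symm
    exact (hcs.mul_right hce).mul_right hcs
  · have : j = k + 1 := by omega
    subst this; rw [eij_base]
    exact (eE_interior hB (k-i) i k N le_rfl h1 hik (by omega) hN).symm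

/-- conjugation: `S i m * E i N * S i m = E m N` for `i < m < N`. -/
theorem conj_S_E (hB : IsBrauer n ω s e) :
    ∀ d i m N, m - i ≤ d → 1 ≤ i → i < m → m < N → N ≤ n →
      sij s i m * eij s e i N * sij s i m = eij s e m N := by
  intro d
  induction d with
  | zero => intro i m N h1 _ h3 _ _; omega
  | succ d ih =>
    intro i m N hd h1 him hmN hN
    by_cases h : i + 1 < m
    · rw [sij_step s h]
      have hdrop := E_drop hB h1 (show i + 1 < N by omega) hN
      have hIH := ih (i+1) m N (by omega) (by omega) h hmN hN
      have hcomm : Commute (s i) (eij s e m N) :=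
        dist_s_E hB (by omega) (by omega) hN h1 (by omega) (by omega)
      calc s i * sij s (i+1) m * s i * eij s e i N * (s i * sij s (i+1) m * s i)
          = s i * (sij s (i+1) m * (s i * eij s e i N * s i) * sij s (i+1) m) * s i := by
            simp only [mul_assoc]
        _ = s i * (sij s (i+1) m * eij s e (i+1) N * sij s (i+1) m) * s i := by
            rw [conj_flip (hB.ss i h1 (by omega)) hdrop]
        _ = s i * eij s e m N * s i := by rw [hIH]
        _ = eij s e m N := conj_of_comm (hB.ss i h1 (by omega)) hcomm
    · have : m = i + 1 := by omega
      subst this; rw [sij_base]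
      exact conj_flip (hB.ss i h1 (by omega)) (E_drop hB h1 (show i + 1 < N by omega) hN)

theorem swap_S_E (hB : IsBrauer n ω s e) {i m N : ℕ}
    (h1 : 1 ≤ i) (him : i < m) (hmN : m < N) (hN : N ≤ n) :
    sij s i m * eij s e i N = eij s e m N * sij s i m := by
  have hc := conj_S_E hB (m-i) i m N le_rfl h1 him hmN hN
  have hsq := S_sq hB h1 him (by omega)
  calc sij s i m * eij s e i N
      = sij s i m * eij s e i N * (sij s i m * sij s i m) := by rw [hsq, mul_one]
    _ = (sij s i m * eij s e i N * sij s i m) * sij s i m := by simp only [mul_assoc]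
    _ = eij s e m N * sij s i m := by rw [hc]

theorem swap_E_S (hB : IsBrauer n ω s e) {i m N : ℕ}
    (h1 : 1 ≤ i) (him : i < m) (hmN : m < N) (hN : N ≤ n) :
    eij s e i N * sij s i m = sij s i m * eij s e m N := by
  have hc := conj_S_E hB (m-i) i m N le_rfl h1 him hmN hN
  have hsq := S_sq hB h1 him (by omega)
  calc eij s e i N * sij s i m
      = (sij s i m * sij s i m) * (eij s e i N * sij s i m) := by rw [hsq, one_mul]
    _ = sij s i m * (sij s i m * eij s e i N * sij s i m) := by simp only [mul_assoc]
    _ = sij s i m * eij s e m N := by rw [hc]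

/-- conjugation fixing: `S a m * E t N * S a m = E t N` for `a < t < m < N` (crossing). -/
theorem conj_S_E_cross (hB : IsBrauer n ω s e) :
    ∀ d a t m N, t - a ≤ d → 1 ≤ a → a < t → t < m → m < N → N ≤ n →
      sij s a m * eij s e t N * sij s a m = eij s e t N := by
  intro d
  induction d with
  | zero => intro a t m N h1 _ h3 _ _ _; omega
  | succ d ih =>
    intro a t m N hd h1 hat htm hmN hN
    have ham : a + 1 < m := by omega
    rw [sij_step s ham]
    by_cases h : a + 1 < t
    · have hcomm : Commute (s a) (eij s e t N) :=
        dist_s_E hB (by omega) (by omega) hN h1 (by omega) (by omega)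
      have hIH := ih (a+1) t m N (by omega) (by omega) h htm hmN hN
      calc s a * sij s (a+1) m * s a * eij s e t N * (s a * sij s (a+1) m * s a)
          = s a * (sij s (a+1) m * (s a * eij s e t N * s a) * sij s (a+1) m) * s a := by
            simp only [mul_assoc]
        _ = s a * (sij s (a+1) m * eij s e t N * sij s (a+1) m) * s a := by
            rw [conj_of_comm (hB.ss a h1 (by omega)) hcomm]
        _ = s a * eij s e t N * s a := by rw [hIH]
        _ = eij s e t N := conj_of_comm (hB.ss a h1 (by omega)) hcomm
    · have hta : t = a + 1 := by omega
      subst hta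
      have hdrop := E_drop hB h1 (show a + 1 < N by omega) hN
      have hcross : Commute (eij s e a N) (sij s (a+1) m) :=
        comm_E_S_nested hB (m-(a+1)) a (a+1) m N le_rfl h1 (by omega) (by omega) (by omega) hN
      have hsq := S_sq hB (show 1 ≤ a+1 by omega) (show a+1 < m by omega) (by omega)
      calc s a * sij s (a+1) m * s a * eij s e (a+1) N * (s a * sij s (a+1) m * s a)
          = s a * (sij s (a+1) m * (s a * eij s e (a+1) N * s a) * sij s (a+1) m) * s a := by
            simp only [mul_assoc]
        _ = s a * (sij s (a+1) m * eij s e a N * sij s (a+1) m) * s a := by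
            rw [show s a * eij s e (a+1) N * s a = eij s e a N from by rw [hdrop]]
        _ = s a * (eij s e a N * sij s (a+1) m * sij s (a+1) m) * s a := by
            rw [hcross.symm.eq]
        _ = s a * eij s e a N * s a := by rw [mul_assoc (eij s e a N), hsq, mul_one]
        _ = eij s e (a+1) N := conj_flip (hB.ss a h1 (by omega)) hdrop

theorem comm_S_E_cross (hB : IsBrauer n ω s e) {a t m N : ℕ}
    (h1 : 1 ≤ a) (hat : a < t) (htm : t < m) (hmN : m < N) (hN : N ≤ n) :
    Commute (sij s a m) (eij s e t N) :=
  comm_of_conj (S_sq hB h1 (by omega) (by omega))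
    (conj_S_E_cross hB (t-a) a t m N le_rfl h1 hat htm hmN hN)

/-- `E i N * E m N = S i m * E m N` for `i < m < N`. -/
theorem EE_eq_SE (hB : IsBrauer n ω s e) :
    ∀ dN d i m N, N - m ≤ dN → m - i ≤ d → 1 ≤ i → i < m → m < N → N ≤ n →
      eij s e i N * eij s e m N = sij s i m * eij s e m N ∧
      eij s e m N * eij s e i N = eij s e m N * sij s i m := by
  intro dN
  induction dN with
  | zero => intro d i m N h1 _ _ _ h5 _; omega
  | succ dN ihN =>
    intro d
    induction d with
    | zero => intro i m N _ h2 _ h4 _ _; omega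
    | succ d ih =>
      intro i m N hdN hd h1 him hmN hN
      by_cases hNm : m + 1 < N
      · -- conjugate by s (N-1)
        have hpop1 := E_pop hB (i := i) (j := N) h1 (by omega) hN
        have hpop2 := E_pop hB (i := m) (j := N) (by omega) hNm hN
        have hcomm : Commute (s (N-1)) (sij s i m) :=
          dist_s_S hB (m-i) i m (N-1) le_rfl h1 him (by omega) (by omega) (by omega) (by omega)
        have hIH := ihN (m-i) i m (N-1) (by omega) (by omega) h1 him (by omega) (by omega)
        have hss := hB.ss (N-1) (by omega) (by omega)
        constructor
        · rw [hpop1, hpop2]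
          calc s (N-1) * eij s e i (N-1) * s (N-1) * (s (N-1) * eij s e m (N-1) * s (N-1))
              = s (N-1) * (eij s e i (N-1) * (s (N-1) * s (N-1)) * eij s e m (N-1)) * s (N-1) := by
                simp only [mul_assoc]
            _ = s (N-1) * (eij s e i (N-1) * eij s e m (N-1)) * s (N-1) := by
                rw [hss, mul_one]
            _ = s (N-1) * (sij s i m * eij s e m (N-1)) * s (N-1) := by rw [hIH.1]
            _ = sij s i m * (s (N-1) * eij s e m (N-1) * s (N-1)) := by
                simp only [← mul_assoc]; rw [hcomm.eq]
        · rw [hpop1, hpop2]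
          calc s (N-1) * eij s e m (N-1) * s (N-1) * (s (N-1) * eij s e i (N-1) * s (N-1))
              = s (N-1) * (eij s e m (N-1) * (s (N-1) * s (N-1)) * eij s e i (N-1)) * s (N-1) := by
                simp only [mul_assoc]
            _ = s (N-1) * (eij s e m (N-1) * eij s e i (N-1)) * s (N-1) := by
                rw [hss, mul_one]
            _ = s (N-1) * (eij s e m (N-1) * sij s i m) * s (N-1) := by rw [hIH.2]
            _ = (s (N-1) * eij s e m (N-1) * s (N-1)) * sij s i m := by
                simp only [mul_assoc]; rw [hcomm.symm.eq]
      · -- N = m + 1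
        have hNm1 : N = m + 1 := by omega
        subst hNm1
        by_cases h2 : i + 1 < m
        · -- conjugate by s i
          have hdrop1 := E_drop hB h1 (show i + 1 < m + 1 by omega) hN
          have hstep := sij_step s h2
          have hcomm : Commute (s i) (eij s e m (m+1)) := by
            rw [eij_base]
            exact hB.se_comm i m h1 (by omega) h2
          have hIH := ih (i+1) m (m+1) (by omega) (by omega) (by omega) h2 (by omega) hN
          have hss := hB.ss i h1 (by omega)
          constructor
          · rw [hdrop1, hstep]
            calc s i * eij s e (i+1) (m+1) * s i * eij s e m (m+1)
                = s i * eij s e (i+1) (m+1) * (s i * eij s e m (m+1)) := by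
                  simp only [mul_assoc]
              _ = s i * eij s e (i+1) (m+1) * (eij s e m (m+1) * s i) := by rw [hcomm.eq]
              _ = s i * (eij s e (i+1) (m+1) * eij s e m (m+1)) * s i := by
                  simp only [mul_assoc]
              _ = s i * (sij s (i+1) m * eij s e m (m+1)) * s i := by rw [hIH.1]
              _ = s i * (sij s (i+1) m * (eij s e m (m+1) * s i)) := by simp only [mul_assoc]
              _ = s i * (sij s (i+1) m * (s i * eij s e m (m+1))) := by rw [← hcomm.eq]
              _ = s i * sij s (i+1) m * s i * eij s e m (m+1) := by simp only [mul_assoc]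
          · rw [hdrop1, hstep]
            calc eij s e m (m+1) * (s i * eij s e (i+1) (m+1) * s i)
                = (eij s e m (m+1) * s i) * eij s e (i+1) (m+1) * s i := by
                  simp only [mul_assoc]
              _ = (s i * eij s e m (m+1)) * eij s e (i+1) (m+1) * s i := by rw [← hcomm.eq]
              _ = s i * (eij s e m (m+1) * eij s e (i+1) (m+1)) * s i := by
                  simp only [mul_assoc]
              _ = s i * (eij s e m (m+1) * sij s (i+1) m) * s i := by rw [hIH.2]
              _ = s i * eij s e m (m+1) * (sij s (i+1) m * s i) := by simp only [mul_assoc]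
              _ = eij s e m (m+1) * s i * (sij s (i+1) m * s i) := by rw [hcomm.eq]
              _ = eij s e m (m+1) * (s i * sij s (i+1) m * s i) := by simp only [mul_assoc]
        · -- base : i = m - 1
          have him1 : m = i + 1 := by omega
          subst him1
          have hE : eij s e i (i+2) = s i * e (i+1) * s i := by
            rw [eij_step s e (show i + 1 < i + 2 by omega), show i + 2 - 1 = i + 1 from rfl,
              sij_base]
          have h2n : i + 2 ≤ n := hN
          have hEb : eij s e (i+1) (i+2) = e (i+1) := eij_base s e (i+1)
          have hSb : sij s i (i+1) = s i := sij_base s i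
          constructor
          · rw [hE, hEb, hSb]
            calc s i * e (i+1) * s i * e (i+1)
                = s i * (e (i+1) * s i * e (i+1)) := by simp only [mul_assoc]
              _ = s i * e (i+1) := by rw [Dese hB h1 h2n]
          · rw [hE, hEb, hSb]
            calc e (i+1) * (s i * e (i+1) * s i)
                = (e (i+1) * s i * e (i+1)) * s i := by simp only [mul_assoc]
              _ = e (i+1) * s i := by rw [Dese hB h1 h2n]

end Rels4
section Tri
variable {K : Type*} [CommRing K] [Algebra K A]

theorem tri (a b c : K) (E F S : A)
    (h1 : S * E = F * S) (h2 : E * S = S * F) (h3 : E * F = S * F) (h4 : F * E = F * S)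
    (h5 : S * S = 1) (hsc : a * b + a * c = b * c) :
    (1 - a • E) * (1 - b • F) * (1 - c • S) = (1 - c • S) * (1 - b • F) * (1 - a • E) := by
  have hEF : E * F = E * S := by rw [h3, ← h2]
  have hFE : F * E = S * E := by rw [h4, ← h1]
  have hFS : F * S = S * E := h1.symm
  have hSF : S * F = E * S := h2.symm
  have hEFS : E * (F * S) = E := by
    rw [← mul_assoc, hEF, mul_assoc, h5, mul_one]
  have hSFE : S * (F * E) = E := by
    calc S * (F * E) = S * F * E := by rw [mul_assoc]
      _ = E * S * E := by rw [hSF]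
      _ = E * (F * S) := by rw [mul_assoc, h1]
      _ = E * S * S := by rw [← mul_assoc, hEF]
      _ = E := by rw [mul_assoc, h5, mul_one]
  simp only [mul_sub, sub_mul, mul_one, one_mul, smul_mul_assoc, mul_smul_comm, smul_smul]
  simp only [mul_assoc]
  rw [hEFS, hSFE, hEF, hFE, hFS, hSF]
  match_scalars
  all_goals try ring
  all_goals try linear_combination hsc
  all_goals linear_combination -hsc
end Tri

section Lists

theorem fac_comm {K : Type*} [CommRing K] [Algebra K A] (x y : K) {X Y : A}
    (h : Commute X Y) : Commute (1 - x • X) (1 - y • Y) := by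
  unfold Commute SemiconjBy
  simp only [mul_sub, sub_mul, mul_one, one_mul, smul_mul_assoc, mul_smul_comm, smul_smul,
    smul_sub]
  rw [h.eq, mul_comm x y]
  abel

theorem prod_pull {L : List ℕ} {b g : ℕ → A}
    (h : L.Pairwise fun i k => Commute (g i) (b k)) :
    (L.map fun i => b i * g i).prod = (L.map b).prod * (L.map g).prod := by
  induction L with
  | nil => simp
  | cons a L ih =>
    simp only [List.map_cons, List.prod_cons]
    rw [ih (List.Pairwise.of_cons h)]
    have hc : Commute (g a) ((L.map b).prod) := by
      apply Commute.list_prod_right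
      intro x hx
      obtain ⟨k, hk, rfl⟩ := List.mem_map.mp hx
      exact (List.pairwise_cons.mp h).1 k hk
    calc b a * g a * ((L.map b).prod * (L.map g).prod)
        = b a * (g a * (L.map b).prod) * (L.map g).prod := by simp only [mul_assoc]
      _ = b a * ((L.map b).prod * g a) * (L.map g).prod := by rw [hc.eq]
      _ = b a * (L.map b).prod * (g a * (L.map g).prod) := by simp only [mul_assoc]

theorem filter_range'_lt (N i : ℕ) :
    (List.range' 1 N).filter (fun j => decide (i < j)) = List.range' (i+1) (N-i) := by
  rcases le_or_gt N i with h | h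
  · rw [show N - i = 0 by omega, List.range'_zero, List.filter_eq_nil_iff.mpr]
    intro a ha
    have := List.mem_range'_1.mp ha
    simp only [decide_eq_true_eq]
    omega
  · have hsplit : List.range' 1 i ++ List.range' (1+i) (N-i) = List.range' 1 N := by
      have := List.range'_append (s := 1) (m := i) (n := N-i) (step := 1)
      rw [show 1 * i = i by omega, show i + (N - i) = N by omega] at this
      exact this
    rw [← hsplit, List.filter_append, List.filter_eq_nil_iff.mpr ?h1,
      List.filter_eq_self.mpr ?h2, List.nil_append, show 1+i = i+1 by omega]
    case h1 =>
      intro a ha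
      have := List.mem_range'_1.mp ha
      simp only [decide_eq_true_eq]
      omega
    case h2 =>
      intro a ha
      have := List.mem_range'_1.mp ha
      simp only [decide_eq_true_eq]
      omega

theorem mem_lexPairs {N : ℕ} {p : ℕ × ℕ} (hp : p ∈ lexPairs N) :
    1 ≤ p.1 ∧ p.1 < p.2 ∧ p.2 ≤ N := by
  unfold lexPairs at hp
  obtain ⟨i, hi, hp⟩ := List.mem_flatMap.mp hp
  obtain ⟨j, hj, rfl⟩ := List.mem_map.mp hp
  have h1 := List.mem_range'_1.mp hi
  have h2 := List.mem_filter.mp hj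
  have h3 := List.mem_range'_1.mp h2.1
  have h4 := of_decide_eq_true h2.2
  exact ⟨by omega, h4, by omega⟩

theorem lex_prod (f : ℕ × ℕ → A) (N : ℕ) :
    ((lexPairs N).map f).prod
      = ((List.range' 1 N).map fun i =>
          ((List.range' (i+1) (N-i)).map fun j => f (i,j)).prod).prod := by
  unfold lexPairs
  rw [List.map_flatMap, List.flatMap_def, List.prod_flatten, List.map_map]
  congr 1
  apply List.map_congr_left
  intro i _
  simp only [Function.comp]
  rw [List.map_map, filter_range'_lt]
  rfl

theorem lex_prod_succ (f : ℕ × ℕ → A) (m : ℕ)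
    (hcomm : ∀ i k j, 1 ≤ i → i < k → k < j → j ≤ m → Commute (f (i, m+1)) (f (k, j))) :
    ((lexPairs (m+1)).map f).prod
      = ((lexPairs m).map f).prod * ((List.range' 1 m).map fun i => f (i, m+1)).prod := by
  rw [lex_prod f (m+1), lex_prod f m]
  have hcat : List.range' 1 (m+1) = List.range' 1 m ++ [m+1] := by
    have := List.range'_concat (s := 1) (n := m) (step := 1)
    rw [show 1 + 1 * m = m + 1 by omega] at this
    exact this
  rw [hcat, List.map_append, List.prod_append]
  have hlast : ((List.range' (m+1+1) (m+1-(m+1))).map fun j => f (m+1,j)).prod = 1 := by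
    rw [Nat.sub_self, List.range'_zero]
    rfl
  simp only [List.map_cons, List.map_nil, List.prod_cons, List.prod_nil, hlast, mul_one]
  have hrow : ∀ i ∈ List.range' 1 m,
      ((List.range' (i+1) (m+1-i)).map fun j => f (i,j)).prod
        = ((List.range' (i+1) (m-i)).map fun j => f (i,j)).prod * f (i, m+1) := by
    intro i hi
    have hib := List.mem_range'_1.mp hi
    have hcat2 : List.range' (i+1) (m+1-i) = List.range' (i+1) (m-i) ++ [m+1] := by
      have := List.range'_concat (s := i+1) (n := m-i) (step := 1)
      rw [show i + 1 + 1 * (m - i) = m + 1 by omega, show m - i + 1 = m + 1 - i by omega] at this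
      exact this
    rw [hcat2, List.map_append, List.prod_append]
    simp
  rw [List.map_congr_left hrow]
  rw [prod_pull]
  apply List.Pairwise.imp_of_mem ?_ (List.pairwise_lt_range' (s := 1) (n := m))
  intro i k hi hk hik
  have hib := List.mem_range'_1.mp hi
  have hkb := List.mem_range'_1.mp hk
  apply Commute.list_prod_right
  intro x hx
  obtain ⟨j, hj, rfl⟩ := List.mem_map.mp hx
  have hjb := List.mem_range'_1.mp hj
  exact hcomm i k j (by omega) hik (by omega) (by omega)

end Lists

section Main
variable {K : Type*} [Field K] [Algebra K A] {n : ℕ} {ω : K} {s e : ℕ → A}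

theorem L2 (hB : IsBrauer n ω s e) (u : ℕ → K)
    (hu : ∀ i j, 1 ≤ i → i < j → j ≤ n → u i + u j ≠ 0 ∧ u i ≠ u j) :
    ∀ d a M, M - a ≤ d → 1 ≤ a → a ≤ M → M < n →
      ((List.range' a (M-a)).reverse.map fun i => 1 - (u i + u n)⁻¹ • eij s e i n).prod *
        (1 - (u M + u n)⁻¹ • eij s e M n) *
        ((List.range' a (M-a)).map fun k => 1 - (u k - u M)⁻¹ • sij s k M).prod =
      ((List.range' a (M-a)).map fun k => 1 - (u k - u M)⁻¹ • sij s k M).prod *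
        ((1 - (u M + u n)⁻¹ • eij s e M n) *
        ((List.range' a (M-a)).reverse.map fun i => 1 - (u i + u n)⁻¹ • eij s e i n).prod) := by
  intro d
  induction d with
  | zero =>
    intro a M hd h1 haM hM
    have : M = a := by omega
    subst this
    simp [Nat.sub_self]
  | succ d ih =>
    intro a M hd h1 haM hM
    by_cases hlt : a < M
    · have hrc : List.range' a (M-a) = a :: List.range' (a+1) (M-a-1) := by
        have := List.range'_succ (s := a) (n := M-a-1) (step := 1)
        rw [show M - a - 1 + 1 = M - a by omega] at this
        exact this
      rw [hrc]
      simp only [List.reverse_cons, List.map_append, List.map_cons, List.map_nil,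
        List.prod_append, List.prod_cons, List.prod_nil, mul_one]
      set P := ((List.range' (a+1) (M-a-1)).reverse.map
        fun i => 1 - (u i + u n)⁻¹ • eij s e i n).prod with hP
      set T := ((List.range' (a+1) (M-a-1)).map
        fun k => 1 - (u k - u M)⁻¹ • sij s k M).prod with hT
      set Aa := (1 - (u a + u n)⁻¹ • eij s e a n) with hAa
      set AM := (1 - (u M + u n)⁻¹ • eij s e M n) with hAM
      set Ba := (1 - (u a - u M)⁻¹ • sij s a M) with hBa
      have hne1 : u a + u n ≠ 0 := (hu a n h1 (by omega) le_rfl).1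
      have hne2 : u M + u n ≠ 0 := (hu M n (by omega) hM le_rfl).1
      have hne3 : u a - u M ≠ 0 := sub_ne_zero.mpr (hu a M h1 hlt (by omega)).2
      have hEE := EE_eq_SE hB (n-M) (M-a) a M n le_rfl le_rfl h1 hlt hM le_rfl
      have hkl : Aa * AM * Ba = Ba * AM * Aa := by
        rw [hAa, hAM, hBa]
        apply tri _ _ _ _ _ _
          (swap_S_E hB h1 hlt hM le_rfl)
          (swap_E_S hB h1 hlt hM le_rfl)
          hEE.1 hEE.2
          (S_sq hB h1 hlt (by omega))
        field_simp
        ring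
      have hAaT : Commute Aa T := by
        rw [hT, hAa]
        apply Commute.list_prod_right
        intro x hx
        obtain ⟨k, hk, rfl⟩ := List.mem_map.mp hx
        have hkb := List.mem_range'_1.mp hk
        exact fac_comm _ _
          (comm_E_S_nested hB (M-k) a k M n le_rfl h1 (by omega) (by omega) hM le_rfl)
      have hBaP : Commute Ba P := by
        rw [hP, hBa]
        apply Commute.list_prod_right
        intro x hx
        obtain ⟨t, ht, rfl⟩ := List.mem_map.mp hx
        have htb := List.mem_range'_1.mp (List.mem_reverse.mp ht)
        exact fac_comm _ _
          (comm_S_E_cross hB h1 (by omega) (by omega) hM le_rfl)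
      have hIH := ih (a+1) M (by omega) (by omega) (by omega) hM
      rw [show M - (a+1) = M - a - 1 by omega] at hIH
      rw [← hP, ← hT, ← hAM] at hIH
      calc P * Aa * AM * (Ba * T)
          = P * (Aa * AM * Ba) * T := by simp only [mul_assoc]
        _ = P * (Ba * AM * Aa) * T := by rw [hkl]
        _ = P * Ba * AM * (Aa * T) := by simp only [mul_assoc]
        _ = P * Ba * AM * (T * Aa) := by rw [hAaT.eq]
        _ = Ba * P * AM * (T * Aa) := by rw [← hBaP.eq]
        _ = Ba * (P * AM * T) * Aa := by simp only [mul_assoc]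
        _ = Ba * (T * (AM * P)) * Aa := by rw [hIH]
        _ = Ba * T * (AM * (P * Aa)) := by simp only [mul_assoc]
    · have : M = a := by omega
      subst this
      simp [Nat.sub_self]

theorem Lmain (hB : IsBrauer n ω s e) (u : ℕ → K)
    (hu : ∀ i j, 1 ≤ i → i < j → j ≤ n → u i + u j ≠ 0 ∧ u i ≠ u j) :
    ∀ m, 1 ≤ m → m < n →
      ((List.range' 1 m).map fun i => 1 - (u i + u n)⁻¹ • eij s e i n).prod *
        ((lexPairs m).map fun p => 1 - (u p.1 - u p.2)⁻¹ • sij s p.1 p.2).prod =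
      ((lexPairs m).map fun p => 1 - (u p.1 - u p.2)⁻¹ • sij s p.1 p.2).prod *
        ((List.range' 1 m).reverse.map fun i => 1 - (u i + u n)⁻¹ • eij s e i n).prod := by
  intro m
  induction m with
  | zero => intro h; omega
  | succ m ih =>
    intro h1 hn'
    by_cases hm : 1 ≤ m
    · have hsplit := lex_prod_succ (fun p => 1 - (u p.1 - u p.2)⁻¹ • sij s p.1 p.2) m
        (by
          intro i k j hi hik hkj hj
          exact fac_comm _ _
            (comm_S_S_nested hB (j-k) i k j (m+1) le_rfl hi hik hkj (by omega) (by omega)))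
      rw [hsplit]
      have hcat : List.range' 1 (m+1) = List.range' 1 m ++ [m+1] := by
        have := List.range'_concat (s := 1) (n := m) (step := 1)
        rw [show 1 + 1 * m = m + 1 by omega] at this
        exact this
      rw [hcat]
      simp only [List.map_append, List.map_cons, List.map_nil, List.prod_append,
        List.prod_cons, List.prod_nil, mul_one, List.reverse_append, List.reverse_cons,
        List.reverse_nil, List.nil_append, List.singleton_append]
      set G := ((List.range' 1 m).map fun i => 1 - (u i + u n)⁻¹ • eij s e i n).prod with hG
      set D := ((List.range' 1 m).reverse.map fun i => 1 - (u i + u n)⁻¹ • eij s e i n).prod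
        with hD
      set SP := ((lexPairs m).map fun p => 1 - (u p.1 - u p.2)⁻¹ • sij s p.1 p.2).prod with hSP
      set A' := (1 - (u (m+1) + u n)⁻¹ • eij s e (m+1) n) with hA'
      set T := ((List.range' 1 m).map
        fun i => 1 - (u i - u (m+1))⁻¹ • sij s i (m+1)).prod with hT
      have hA'SP : Commute A' SP := by
        rw [hA', hSP]
        apply Commute.list_prod_right
        intro x hx
        obtain ⟨p, hp, rfl⟩ := List.mem_map.mp hx
        obtain ⟨hp1, hp2, hp3⟩ := mem_lexPairs hp
        exact fac_comm _ _
          (comm_E_S_sep hB (p.2-p.1) p.1 p.2 (m+1) n le_rfl hp1 hp2 (by omega) hn' le_rfl)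
      have hL2 := L2 hB u hu m 1 (m+1) (by omega) le_rfl (by omega) hn'
      rw [show m + 1 - 1 = m from rfl] at hL2
      rw [← hD, ← hA', ← hT] at hL2
      have hIH := ih hm (by omega)
      calc G * A' * (SP * T)
          = G * (A' * SP) * T := by simp only [mul_assoc]
        _ = G * (SP * A') * T := by rw [hA'SP.eq]
        _ = G * SP * (A' * T) := by simp only [mul_assoc]
        _ = SP * D * (A' * T) := by rw [hIH]
        _ = SP * (D * A' * T) := by simp only [mul_assoc]
        _ = SP * (T * (A' * D)) := by rw [hL2]
        _ = SP * T * (A' * D) := by simp only [mul_assoc]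
    · have hm0 : m = 0 := by omega
      subst hm0
      have hlex1 : lexPairs 1 = [] := rfl
      simp [hlex1]

end Main

section Final
variable {K : Type*} [Field K] [Algebra K A]

theorem psi_recursion_aux (n : ℕ) (hn : 2 ≤ n) (s e : ℕ → A) {ω : K}
    (hB : IsBrauer n ω s e) (u : ℕ → K)
    (hu : ∀ i j, 1 ≤ i → i < j → j ≤ n → u i + u j ≠ 0 ∧ u i ≠ u j) :
    Psi s e n u =
      Psi s e (n-1) u *
      (((List.range' 1 (n-1)).reverse.map fun i =>
        1 - (u i + u n)⁻¹ • eij s e i n).prod) *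
      (((List.range' 1 (n-1)).map fun i =>
        1 - (u i - u n)⁻¹ • sij s i n).prod) := by
  obtain ⟨m, rfl⟩ : ∃ m, n = m + 1 := ⟨n - 1, by omega⟩
  rw [show m + 1 - 1 = m from rfl]
  unfold Psi
  have hsplitE := lex_prod_succ (fun p => 1 - (u p.1 + u p.2)⁻¹ • eij s e p.1 p.2) m
    (by
      intro i k j hi hik hkj hj
      exact fac_comm _ _
        (comm_E_E_nested hB hi hik hkj (by omega) le_rfl))
  have hsplitS := lex_prod_succ (fun p => 1 - (u p.1 - u p.2)⁻¹ • sij s p.1 p.2) m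
    (by
      intro i k j hi hik hkj hj
      exact fac_comm _ _
        (comm_S_S_nested hB (j-k) i k j (m+1) le_rfl hi hik hkj (by omega) le_rfl))
  rw [hsplitE, hsplitS]
  have hL := Lmain hB u hu m (by omega) (by omega)
  set EP := ((lexPairs m).map fun p => 1 - (u p.1 + u p.2)⁻¹ • eij s e p.1 p.2).prod with hEP
  set SP := ((lexPairs m).map fun p => 1 - (u p.1 - u p.2)⁻¹ • sij s p.1 p.2).prod with hSP
  set G := ((List.range' 1 m).map fun i => 1 - (u i + u (m+1))⁻¹ • eij s e i (m+1)).prod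
    with hG
  set D := ((List.range' 1 m).reverse.map fun i =>
    1 - (u i + u (m+1))⁻¹ • eij s e i (m+1)).prod with hD
  set T := ((List.range' 1 m).map fun i => 1 - (u i - u (m+1))⁻¹ • sij s i (m+1)).prod with hT
  calc EP * G * (SP * T)
      = EP * (G * SP) * T := by simp only [mul_assoc]
    _ = EP * (SP * D) * T := by rw [hL]
    _ = EP * SP * D * T := by simp only [mul_assoc]

end Final

end AuxProofs

end BrauerFusion

namespace BrauerFusion

/-- **The recursion (3.10).** For `n ≥ 2`, in `B_n(ω) ⊗ F(u_1,…,u_n)`,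
`Ψ(u_1,…,u_n) = Ψ(u_1,…,u_{n-1}) (1 - e_{n-1,n}/(u_{n-1}+u_n)) ⋯ (1 - e_{1,n}/(u_1+u_n)) ·
(1 - s_{1,n}/(u_1-u_n)) ⋯ (1 - s_{n-1,n}/(u_{n-1}-u_n))`.  This is stated in any algebra
over a field `K ⊇ ℂ(ω)` with elements `u_1,…,u_n` at which all the denominators are
nonzero (in particular for independent indeterminates `u_1,…,u_n`). -/
theorem psi_recursion
    {K : Type*} [Field K] [Algebra F K] {A : Type*} [Ring A] [Algebra K A]
    (n : ℕ) (hn : 2 ≤ n) (s e : ℕ → A) (hB : IsBrauer n (algebraMap F K ωF) s e)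
    (u : ℕ → K)
    (hu : ∀ i j, 1 ≤ i → i < j → j ≤ n → u i + u j ≠ 0 ∧ u i ≠ u j) :
    Psi s e n u =
      Psi s e (n-1) u *
      (((List.range' 1 (n-1)).reverse.map fun i =>
        1 - (u i + u n)⁻¹ • eij s e i n).prod) *
      (((List.range' 1 (n-1)).map fun i =>
        1 - (u i - u n)⁻¹ • sij s i n).prod) :=
  psi_recursion_aux n hn s e hB u hu

end BrauerFusion
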